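/- Let 𝒞 be a set of n unit vectors with pairwise inner products in [−1, α], 0 ≤ α < 1, let γ(u) be the sum of negative inner products at u, let L = (3/2)(1 + αn), and let B = {u ∈ 𝒞 : −γ(u) ≥ L}. Define x(u) = −γ(u) for u ∈ B and x(u) = L otherwise. Then 0 ≤ (1 + αn)·Σ_{u∈𝒞} x(u)² − L·Σ_{u∈B} x(u)², and consequently Σ_{u∈B} x(u)² ≤ 2L²n. -/

import Mathlib

open Classical in
theorem key_intermediate_step {d n : ℕ} (α : ℝ) (hα0 : 0 ≤ α) (hα1 : α < 1)
    (𝒞 : Finset (EuclideanSpace ℝ (Fin d))) (hcard : 𝒞.card = n)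
    (hunit : ∀ u ∈ 𝒞, ‖u‖ = 1)
    (hpair : ∀ u ∈ 𝒞, ∀ v ∈ 𝒞, u ≠ v → (inner ℝ u v : ℝ) ≤ α)
    (γ : EuclideanSpace ℝ (Fin d) → ℝ)
    (hγ : ∀ u, γ u = ∑ v ∈ 𝒞.filter (fun v => (inner ℝ u v : ℝ) < 0), (inner ℝ u v : ℝ))
    (L : ℝ) (hL : L = 3 / 2 * (1 + α * n))
    (B : Finset (EuclideanSpace ℝ (Fin d)))
    (hB : B = 𝒞.filter (fun u => L ≤ -γ u))
    (x : EuclideanSpace ℝ (Fin d) → ℝ)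
    (hx : ∀ u, x u = if u ∈ B then -γ u else L) :
    0 ≤ (1 + α * n) * ∑ u ∈ 𝒞, x u ^ 2 - L * ∑ u ∈ B, x u ^ 2 ∧
    ∑ u ∈ B, x u ^ 2 ≤ 2 * L ^ 2 * n := by
  have hLpos : (0:ℝ) < L := by
    have h1 : (0:ℝ) ≤ α * n := by positivity
    rw [hL]; linarith
  have hBsub : B ⊆ 𝒞 := by rw [hB]; exact Finset.filter_subset _ _
  have hxL : ∀ u, L ≤ x u := by
    intro u
    rw [hx u]
    split_ifs with h
    · rw [hB] at h; exact (Finset.mem_filter.mp h).2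
    · exact le_refl L
  have hxpos : ∀ u, 0 < x u := fun u => lt_of_lt_of_le hLpos (hxL u)
  -- Gram matrix positive semidefiniteness
  have hS : (0:ℝ) ≤ ∑ u ∈ 𝒞, ∑ v ∈ 𝒞, x u * x v * inner ℝ u v := by
    have h := real_inner_self_nonneg (x := ∑ u ∈ 𝒞, x u • u)
    calc (0:ℝ) ≤ inner ℝ (∑ u ∈ 𝒞, x u • u) (∑ u ∈ 𝒞, x u • u) := h
    _ = ∑ u ∈ 𝒞, ∑ v ∈ 𝒞, x u * x v * inner ℝ u v := by
        rw [sum_inner]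
        refine Finset.sum_congr rfl fun u hu => ?_
        rw [inner_sum]
        refine Finset.sum_congr rfl fun v hv => ?_
        rw [real_inner_smul_left, real_inner_smul_right]; ring
  -- pointwise bound on the row sums
  have key : ∀ u ∈ 𝒞, ∑ v ∈ 𝒞, x u * x v * inner ℝ u v ≤
      x u ^ 2 + α * (x u * ∑ v ∈ 𝒞, x v) - (if u ∈ B then L * x u ^ 2 else 0) := by
    intro u hu
    have huu : (inner ℝ u u : ℝ) = 1 := by
      rw [real_inner_self_eq_norm_sq, hunit u hu]; norm_num
    rw [← Finset.add_sum_erase 𝒞 _ hu, huu,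
      ← Finset.sum_filter_add_sum_filter_not (𝒞.erase u)
        (fun v => (inner ℝ u v : ℝ) < 0) (fun v => x u * x v * inner ℝ u v)]
    have hNeq : (𝒞.erase u).filter (fun v => (inner ℝ u v : ℝ) < 0)
        = 𝒞.filter (fun v => (inner ℝ u v : ℝ) < 0) := by
      rw [Finset.filter_erase, Finset.erase_eq_of_notMem]
      intro hmem
      have h2 := (Finset.mem_filter.mp hmem).2
      rw [huu] at h2
      linarith
    have hneg : ∑ v ∈ (𝒞.erase u).filter (fun v => (inner ℝ u v : ℝ) < 0),
        x u * x v * inner ℝ u v ≤ -(if u ∈ B then L * x u ^ 2 else 0) := by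
      split_ifs with hmem
      · have hterm : ∀ v ∈ (𝒞.erase u).filter (fun v => (inner ℝ u v : ℝ) < 0),
            x u * x v * inner ℝ u v ≤ x u * (L * inner ℝ u v) := by
          intro v hv
          have hip : (inner ℝ u v : ℝ) < 0 := (Finset.mem_filter.mp hv).2
          have h1 : x v * inner ℝ u v ≤ L * inner ℝ u v :=
            mul_le_mul_of_nonpos_right (hxL v) hip.le
          calc x u * x v * inner ℝ u v = x u * (x v * inner ℝ u v) := by ring
          _ ≤ x u * (L * inner ℝ u v) :=
            mul_le_mul_of_nonneg_left h1 (hxpos u).le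
        calc ∑ v ∈ (𝒞.erase u).filter (fun v => (inner ℝ u v : ℝ) < 0),
              x u * x v * inner ℝ u v
            ≤ ∑ v ∈ (𝒞.erase u).filter (fun v => (inner ℝ u v : ℝ) < 0),
              x u * (L * inner ℝ u v) := Finset.sum_le_sum hterm
        _ = x u * L * γ u := by
            rw [hNeq, hγ u, Finset.mul_sum]
            refine Finset.sum_congr rfl fun v hv => by ring
        _ = -(L * x u ^ 2) := by
            have : x u = -γ u := by rw [hx u, if_pos hmem]
            rw [this]; ring
      · refine le_trans (Finset.sum_nonpos fun v hv => ?_) (by norm_num)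
        have hip : (inner ℝ u v : ℝ) < 0 := (Finset.mem_filter.mp hv).2
        have := mul_pos (hxpos u) (hxpos v)
        nlinarith
    have hpos : ∑ v ∈ (𝒞.erase u).filter (fun v => ¬ (inner ℝ u v : ℝ) < 0),
        x u * x v * inner ℝ u v ≤ α * (x u * ∑ v ∈ 𝒞, x v) := by
      have step1 : ∑ v ∈ (𝒞.erase u).filter (fun v => ¬ (inner ℝ u v : ℝ) < 0),
          x u * x v * inner ℝ u v
          ≤ ∑ v ∈ (𝒞.erase u).filter (fun v => ¬ (inner ℝ u v : ℝ) < 0),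
            α * (x u * x v) := by
        refine Finset.sum_le_sum fun v hv => ?_
        have hv' := Finset.mem_filter.mp hv
        have hvC : v ∈ 𝒞 := Finset.mem_of_mem_erase hv'.1
        have hvu : u ≠ v := (Finset.ne_of_mem_erase hv'.1).symm
        have hle : (inner ℝ u v : ℝ) ≤ α := hpair u hu v hvC hvu
        have hge : (0:ℝ) ≤ inner ℝ u v := not_lt.mp hv'.2
        have hxx : (0:ℝ) ≤ x u * x v := (mul_pos (hxpos u) (hxpos v)).le
        calc x u * x v * inner ℝ u v ≤ x u * x v * α :=
          mul_le_mul_of_nonneg_left hle hxx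
        _ = α * (x u * x v) := by ring
      have step2 : ∑ v ∈ (𝒞.erase u).filter (fun v => ¬ (inner ℝ u v : ℝ) < 0),
          α * (x u * x v) ≤ ∑ v ∈ 𝒞, α * (x u * x v) := by
        refine Finset.sum_le_sum_of_subset_of_nonneg ?_ fun v _ _ => ?_
        · exact (Finset.filter_subset _ _).trans (Finset.erase_subset _ _)
        · exact mul_nonneg hα0 (mul_pos (hxpos u) (hxpos v)).le
      calc _ ≤ ∑ v ∈ 𝒞, α * (x u * x v) := step1.trans step2
      _ = α * (x u * ∑ v ∈ 𝒞, x v) := by rw [Finset.mul_sum, Finset.mul_sum]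
      _ ≤ α * (x u * ∑ v ∈ 𝒞, x v) := le_refl _
    have hd : x u * x u * 1 = x u ^ 2 := by ring
    linarith
  -- sum the pointwise bound
  have hsum : ∑ u ∈ 𝒞, ∑ v ∈ 𝒞, x u * x v * inner ℝ u v ≤
      (∑ u ∈ 𝒞, x u ^ 2) + α * (∑ u ∈ 𝒞, x u) ^ 2 - L * ∑ u ∈ B, x u ^ 2 := by
    calc ∑ u ∈ 𝒞, ∑ v ∈ 𝒞, x u * x v * inner ℝ u v
        ≤ ∑ u ∈ 𝒞, (x u ^ 2 + α * (x u * ∑ v ∈ 𝒞, x v)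
            - (if u ∈ B then L * x u ^ 2 else 0)) := Finset.sum_le_sum key
    _ = (∑ u ∈ 𝒞, x u ^ 2) + α * (∑ u ∈ 𝒞, x u) ^ 2 - L * ∑ u ∈ B, x u ^ 2 := by
        rw [Finset.sum_sub_distrib, Finset.sum_add_distrib]
        congr 1
        · congr 1
          rw [← Finset.mul_sum, ← Finset.sum_mul]
          ring
        · rw [Finset.sum_ite_mem, Finset.inter_eq_right.mpr hBsub, Finset.mul_sum]
  have hn : (𝒞.card : ℝ) = n := by exact_mod_cast congrArg Nat.cast hcard
  have hCS : (∑ u ∈ 𝒞, x u) ^ 2 ≤ n * ∑ u ∈ 𝒞, x u ^ 2 := by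
    have := sq_sum_le_card_mul_sum_sq (s := 𝒞) (f := x)
    rw [hn] at this
    exact this
  have h1 : 0 ≤ (1 + α * n) * ∑ u ∈ 𝒞, x u ^ 2 - L * ∑ u ∈ B, x u ^ 2 := by
    have hαcs : α * (∑ u ∈ 𝒞, x u) ^ 2 ≤ α * (n * ∑ u ∈ 𝒞, x u ^ 2) :=
      mul_le_mul_of_nonneg_left hCS hα0
    nlinarith [hS, hsum]
  refine ⟨h1, ?_⟩
  have hsd : ∑ u ∈ 𝒞, x u ^ 2 ≤ (∑ u ∈ B, x u ^ 2) + n * L ^ 2 := by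
    rw [← Finset.sum_sdiff hBsub]
    have hconst : ∑ u ∈ 𝒞 \ B, x u ^ 2 = (𝒞 \ B).card * L ^ 2 := by
      rw [Finset.sum_congr rfl (fun u hu => ?_), Finset.sum_const, nsmul_eq_mul]
      rw [hx u, if_neg (Finset.mem_sdiff.mp hu).2]
    have hcle : ((𝒞 \ B).card : ℝ) ≤ n := by
      rw [← hn]; exact_mod_cast Finset.card_le_card (Finset.sdiff_subset)
    have hL2 : (0:ℝ) ≤ L ^ 2 := sq_nonneg L
    rw [hconst]
    nlinarith
  have hA : 1 + α * n = 2 / 3 * L := by rw [hL]; ring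
  rw [hA] at h1
  nlinarith [h1, mul_le_mul_of_nonneg_left hsd (by linarith : (0:ℝ) ≤ 2 / 3 * L), hLpos]
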